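/- Let R₂ = F₂[h,k,s]/(h², k², s², hs, ks) be the quotient of the polynomial ring in three variables over the field F₂ with two elements by the ideal generated by h², k², s², hs, and ks. Then R₂ is a local ring with maximal ideal m generated by the images of h, k, s, and the annihilator of m in R₂ equals the F₂-linear span of the images of s and hk; in particular the socle of R₂ is two-dimensional over F₂. -/

import Mathlib

/-!
STATEMENT 10: The ring `R₂ = F₂[h,k,s]/(h², k², s², hs, ks)` is local with
maximal ideal `m = (h, k, s)`, and the annihilator of `m` in `R₂` equals the
`F₂`-linear span of the images of `s` and `hk`; in particular the socle of `R₂`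
is two-dimensional over `F₂`.  Here `h = X 0`, `k = X 1`, `s = X 2`.
-/

open MvPolynomial

/-- The ideal `(h², k², s², hs, ks)` in `F₂[h,k,s]`. -/
noncomputable abbrev I₂ : Ideal (MvPolynomial (Fin 3) (ZMod 2)) :=
  Ideal.span {X 0 ^ 2, X 1 ^ 2, X 2 ^ 2, X 0 * X 2, X 1 * X 2}

/-- The ring `R₂ = F₂[h,k,s]/(h², k², s², hs, ks)`. -/
abbrev R₂ : Type := MvPolynomial (Fin 3) (ZMod 2) ⧸ I₂

/-- The image of `h` in `R₂`. -/
noncomputable abbrev h₂ : R₂ := Ideal.Quotient.mk I₂ (X 0)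

/-- The image of `k` in `R₂`. -/
noncomputable abbrev k₂ : R₂ := Ideal.Quotient.mk I₂ (X 1)

/-- The image of `s` in `R₂`. -/
noncomputable abbrev s₂ : R₂ := Ideal.Quotient.mk I₂ (X 2)

set_option synthInstance.maxHeartbeats 1000000
set_option maxHeartbeats 1000000

abbrev D := DualNumber (ZMod 2)
abbrev T := DualNumber D × D

def v : Fin 3 → T :=
  ![((DualNumber.eps : DualNumber D), 0), ((TrivSqZeroExt.inl DualNumber.eps : DualNumber D), 0),
    ((0 : DualNumber D), DualNumber.eps)]

noncomputable def Φ : MvPolynomial (Fin 3) (ZMod 2) →ₐ[ZMod 2] T := aeval v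

lemma Phi_ker : ∀ p ∈ I₂, Φ p = 0 := by
  intro p hp
  rw [← RingHom.mem_ker]
  refine Ideal.span_le.mpr ?_ hp
  intro q hq
  simp only [Set.mem_insert_iff, Set.mem_singleton_iff] at hq
  rcases hq with rfl|rfl|rfl|rfl|rfl <;>
    simp [Φ, v, RingHom.mem_ker, pow_two, Prod.ext_iff, ← TrivSqZeroExt.inl_mul,
      DualNumber.eps_mul_eps]

noncomputable def Φ' : R₂ →+* T := Ideal.Quotient.lift I₂ (Φ : _ →+* T) Phi_ker

lemma Phi_h : Φ' h₂ = ((DualNumber.eps : DualNumber D), 0) := by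
  simp [Φ', Φ, v]
lemma Phi_k : Φ' k₂ = ((TrivSqZeroExt.inl DualNumber.eps : DualNumber D), 0) := by
  simp [Φ', Φ, v]
lemma Phi_s : Φ' s₂ = ((0 : DualNumber D), DualNumber.eps) := by
  simp [Φ', Φ, v]

noncomputable abbrev al : ZMod 2 →+* R₂ := algebraMap (ZMod 2) R₂

lemma al_eq (a : ZMod 2) : al a = Ideal.Quotient.mk I₂ (C a) := by
  rfl

lemma Phi_C (a : ZMod 2) : Φ' (al a) = algebraMap (ZMod 2) T a := by
  rw [al_eq]
  simp [Φ', Φ]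

lemma indep (a b c d e : ZMod 2)
    (hz : al a + al b * h₂ + al c * k₂ + al d * s₂ + al e * (h₂ * k₂) = 0) :
    a = 0 ∧ b = 0 ∧ c = 0 ∧ d = 0 ∧ e = 0 := by
  have H := congrArg Φ' hz
  simp only [map_add, map_mul, Phi_C, Phi_h, Phi_k, Phi_s, map_zero] at H
  have h1 := congrArg Prod.fst H
  have h2 := congrArg Prod.snd H
  simp only [Prod.fst_add, Prod.snd_add, Prod.fst_mul, Prod.snd_mul, Prod.fst_zero,
    Prod.snd_zero] at h1 h2
  have h1ff := congrArg (fun x => (TrivSqZeroExt.fst (TrivSqZeroExt.fst x))) h1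
  have h1fs := congrArg (fun x => (TrivSqZeroExt.snd (TrivSqZeroExt.fst x))) h1
  have h1sf := congrArg (fun x => (TrivSqZeroExt.fst (TrivSqZeroExt.snd x))) h1
  have h1ss := congrArg (fun x => (TrivSqZeroExt.snd (TrivSqZeroExt.snd x))) h1
  have h2f := congrArg TrivSqZeroExt.fst h2
  have h2s := congrArg TrivSqZeroExt.snd h2
  simp only [DualNumber.eps, TrivSqZeroExt.fst_add, TrivSqZeroExt.snd_add,
    TrivSqZeroExt.fst_mul, TrivSqZeroExt.snd_mul, TrivSqZeroExt.fst_inl,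
    TrivSqZeroExt.snd_inl, TrivSqZeroExt.fst_inr, TrivSqZeroExt.snd_inr,
    TrivSqZeroExt.algebraMap_eq_inl', TrivSqZeroExt.fst_zero, TrivSqZeroExt.snd_zero,
    Prod.algebraMap_apply] at h1ff h1fs h1sf h1ss h2f h2s
  simp at h1ff h1fs h1sf h1ss h2f h2s
  exact ⟨h1ff, h1sf, h1fs, h2s, h1ss⟩

lemma rel_hh : h₂ * h₂ = 0 := by
  rw [← map_mul, Ideal.Quotient.eq_zero_iff_mem]
  exact Ideal.subset_span (by simp [pow_two])
lemma rel_kk : k₂ * k₂ = 0 := by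
  rw [← map_mul, Ideal.Quotient.eq_zero_iff_mem]
  exact Ideal.subset_span (by simp [pow_two])
lemma rel_ss : s₂ * s₂ = 0 := by
  rw [← map_mul, Ideal.Quotient.eq_zero_iff_mem]
  exact Ideal.subset_span (by simp [pow_two])
lemma rel_hs : h₂ * s₂ = 0 := by
  rw [← map_mul, Ideal.Quotient.eq_zero_iff_mem]
  exact Ideal.subset_span (by simp)
lemma rel_ks : k₂ * s₂ = 0 := by
  rw [← map_mul, Ideal.Quotient.eq_zero_iff_mem]
  exact Ideal.subset_span (by simp)

lemma repr5 (x : R₂) : ∃ a b c d e : ZMod 2,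
    x = al a + al b * h₂ + al c * k₂ + al d * s₂ + al e * (h₂ * k₂) := by
  obtain ⟨p, rfl⟩ := Ideal.Quotient.mk_surjective (I := I₂) x
  induction p using MvPolynomial.induction_on with
  | C a => exact ⟨a, 0, 0, 0, 0, by simp [← al_eq]⟩
  | add p q hp hq =>
    obtain ⟨a, b, c, d, e, hp⟩ := hp
    obtain ⟨a', b', c', d', e', hq⟩ := hq
    exact ⟨a + a', b + b', c + c', d + d', e + e', by
      simp only [map_add]; rw [hp, hq]; ring⟩
  | mul_X p i hp =>
    obtain ⟨a, b, c, d, e, hp⟩ := hp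
    fin_cases i <;> simp only [Fin.isValue, Fin.mk_one,
        show (⟨0, by norm_num⟩ : Fin 3) = 0 from rfl,
        show (⟨1, by norm_num⟩ : Fin 3) = 1 from rfl,
        show (⟨2, by norm_num⟩ : Fin 3) = 2 from rfl]
    · refine ⟨0, a, 0, 0, c, ?_⟩
      rw [map_mul, hp]
      simp only [map_zero]
      linear_combination (al b) * rel_hh + (al d) * rel_hs + (al e * k₂) * rel_hh
    · refine ⟨0, 0, a, 0, b, ?_⟩
      rw [map_mul, hp]
      simp only [map_zero]
      linear_combination (al c) * rel_kk + (al d) * rel_ks + (al e * h₂) * rel_kk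
    · refine ⟨0, 0, 0, a, 0, ?_⟩
      rw [map_mul, hp]
      simp only [map_zero]
      linear_combination (al b) * rel_hs + (al c) * rel_ks + (al d) * rel_ss + (al e * h₂) * rel_ks

lemma two_eq_zero : (2 : R₂) = 0 := by
  have h1 : al (2 : ZMod 2) = (2 : R₂) := map_ofNat al 2
  have h2 : (2 : ZMod 2) = 0 := by decide
  rw [h2, map_zero] at h1
  exact h1.symm

lemma unit_one_add (b c d e : ZMod 2) :
    (1 + (al b * h₂ + al c * k₂ + al d * s₂ + al e * (h₂ * k₂))) *
    (1 + (al b * h₂ + al c * k₂ + al d * s₂ + al e * (h₂ * k₂))) = 1 := by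
  linear_combination (al b^2 + al e^2 * k₂^2) * rel_hh + al c^2 * rel_kk + al d^2 * rel_ss +
    (al b * h₂ + al c * k₂ + al d * s₂ + al e * (h₂*k₂) + al b*al c*h₂*k₂ + al b*al d*h₂*s₂ +
      al c*al d*k₂*s₂ + al b*al e*h₂*h₂*k₂ + al c*al e*h₂*k₂*k₂ + al d*al e*s₂*h₂*k₂) * two_eq_zero

noncomputable def ψ : R₂ →+* ZMod 2 :=
  (TrivSqZeroExt.fstHom (ZMod 2) (ZMod 2) (ZMod 2)).toRingHom.comp ((RingHom.snd _ _).comp Φ')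

lemma psi_h : ψ h₂ = 0 := by
  simp only [ψ, RingHom.coe_comp, Function.comp_apply, Phi_h]; rfl
lemma psi_k : ψ k₂ = 0 := by
  simp only [ψ, RingHom.coe_comp, Function.comp_apply, Phi_k]; rfl
lemma psi_s : ψ s₂ = 0 := by
  simp only [ψ, RingHom.coe_comp, Function.comp_apply, Phi_s]; rfl

lemma one_notin_m : (1 : R₂) ∉ Ideal.span {h₂, k₂, s₂} := by
  intro hmem
  have hle : Ideal.span {h₂, k₂, s₂} ≤ RingHom.ker ψ := by
    rw [Ideal.span_le]
    intro q hq
    simp only [Set.mem_insert_iff, Set.mem_singleton_iff] at hq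
    rcases hq with rfl|rfl|rfl <;>
      simp [RingHom.mem_ker, psi_h, psi_k, psi_s]
  have := hle hmem
  rw [RingHom.mem_ker, map_one] at this
  exact one_ne_zero this

lemma n_mem_m (b c d e : ZMod 2) :
    al b * h₂ + al c * k₂ + al d * s₂ + al e * (h₂ * k₂) ∈ Ideal.span {h₂, k₂, s₂} := by
  have hh : h₂ ∈ Ideal.span {h₂, k₂, s₂} := Ideal.subset_span (by simp)
  have hk : k₂ ∈ Ideal.span {h₂, k₂, s₂} := Ideal.subset_span (by simp)
  have hs : s₂ ∈ Ideal.span {h₂, k₂, s₂} := Ideal.subset_span (by simp)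
  refine add_mem (add_mem (add_mem ?_ ?_) ?_) ?_
  · exact Ideal.mul_mem_left _ _ hh
  · exact Ideal.mul_mem_left _ _ hk
  · exact Ideal.mul_mem_left _ _ hs
  · have : al e * (h₂ * k₂) = (al e * h₂) * k₂ := by ring
    rw [this]; exact Ideal.mul_mem_left _ _ hk

instance : Nontrivial R₂ := by
  refine nontrivial_of_ne 1 0 fun hcontra => ?_
  have := congrArg ψ hcontra
  rw [map_one, map_zero] at this
  exact one_ne_zero this

lemma zmod2_cases : ∀ z : ZMod 2, z = 0 ∨ z = 1 := by decide

lemma R2_local : IsLocalRing R₂ := by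
  apply IsLocalRing.of_isUnit_or_isUnit_one_sub_self
  intro x
  obtain ⟨a, b, c, d, e, hx⟩ := repr5 x
  rcases zmod2_cases a with rfl | rfl
  · right
    rw [map_zero, zero_add] at hx
    have h1 : 1 - x = 1 + (al b * h₂ + al c * k₂ + al d * s₂ + al e * (h₂ * k₂)) := by
      rw [hx]; linear_combination (-(al b * h₂ + al c * k₂ + al d * s₂ + al e * (h₂ * k₂))) * two_eq_zero
    rw [h1]
    exact IsUnit.of_mul_eq_one _ (unit_one_add b c d e)
  · left
    rw [map_one] at hx
    have h1 : x = 1 + (al b * h₂ + al c * k₂ + al d * s₂ + al e * (h₂ * k₂)) := by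
      rw [hx]; ring
    rw [h1]
    exact IsUnit.of_mul_eq_one _ (unit_one_add b c d e)

lemma m_maximal : (Ideal.span {h₂, k₂, s₂}).IsMaximal := by
  rw [Ideal.isMaximal_iff]
  refine ⟨one_notin_m, fun J x hmJ hx1 hx2 => ?_⟩
  obtain ⟨a, b, c, d, e, hx⟩ := repr5 x
  rcases zmod2_cases a with rfl | rfl
  · rw [map_zero, zero_add] at hx
    exact absurd (hx ▸ n_mem_m b c d e) hx1
  · rw [map_one] at hx
    have h1 : x * x = 1 := by
      rw [hx]; linear_combination unit_one_add b c d e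
    rw [← h1]
    exact J.mul_mem_left x hx2

lemma mem_ann_iff (x : R₂) :
    x ∈ (Ideal.span {h₂, k₂, s₂} : Ideal R₂).annihilator ↔
      x * h₂ = 0 ∧ x * k₂ = 0 ∧ x * s₂ = 0 := by
  rw [← Ideal.submodule_span_eq, Submodule.mem_annihilator_span]
  constructor
  · intro H
    refine ⟨H ⟨h₂, by simp⟩, H ⟨k₂, by simp⟩, H ⟨s₂, by simp⟩⟩
  · rintro ⟨e1, e2, e3⟩ ⟨n, hn⟩
    simp only [Set.mem_insert_iff, Set.mem_singleton_iff] at hn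
    rcases hn with rfl|rfl|rfl <;> simpa [smul_eq_mul]

lemma ann_eq :
    Submodule.restrictScalars (ZMod 2)
        ((Ideal.span {h₂, k₂, s₂} : Ideal R₂).annihilator) =
      Submodule.span (ZMod 2) {s₂, h₂ * k₂} := by
  have alz : al (0 : ZMod 2) = 0 := map_zero al
  apply le_antisymm
  · intro x hx
    rw [Submodule.restrictScalars_mem, mem_ann_iff] at hx
    obtain ⟨e1, e2, e3⟩ := hx
    obtain ⟨a, b, c, d, e, hx⟩ := repr5 x
    rw [hx] at e1 e2
    have i1 : al 0 + al a * h₂ + al 0 * k₂ + al 0 * s₂ + al c * (h₂ * k₂) = 0 := by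
      linear_combination e1 + (- al b) * rel_hh + (- al d) * rel_hs + (- al e * k₂) * rel_hh +
        (1 + k₂ + s₂) * alz
    have i2 : al 0 + al 0 * h₂ + al a * k₂ + al 0 * s₂ + al b * (h₂ * k₂) = 0 := by
      linear_combination e2 + (- al c) * rel_kk + (- al d) * rel_ks + (- al e * h₂) * rel_kk +
        (1 + h₂ + s₂) * alz
    obtain ⟨-, ha, -, -, hc⟩ := indep _ _ _ _ _ i1
    obtain ⟨-, -, -, -, hb⟩ := indep _ _ _ _ _ i2
    rw [ha, hb, hc, alz, zero_mul, zero_mul, zero_add, zero_add, zero_add] at hx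
    have hx2 : x = d • s₂ + e • (h₂ * k₂) := by
      rw [hx, ← Algebra.smul_def, ← Algebra.smul_def]
    rw [hx2]
    exact Submodule.add_mem _
      (Submodule.smul_mem _ _ (Submodule.subset_span (by simp)))
      (Submodule.smul_mem _ _ (Submodule.subset_span (by simp)))
  · rw [Submodule.span_le]
    intro q hq
    simp only [Set.mem_insert_iff, Set.mem_singleton_iff] at hq
    rcases hq with rfl|rfl <;>
      rw [SetLike.mem_coe, Submodule.restrictScalars_mem, mem_ann_iff]
    · exact ⟨by linear_combination rel_hs, by linear_combination rel_ks,
        by linear_combination rel_ss⟩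
    · exact ⟨by linear_combination k₂ * rel_hh, by linear_combination h₂ * rel_kk,
        by linear_combination k₂ * rel_hs⟩

lemma indep_pair : LinearIndependent (ZMod 2) ![s₂, h₂ * k₂] := by
  rw [LinearIndependent.pair_iff]
  intro σ τ hστ
  have alz : al (0 : ZMod 2) = 0 := map_zero al
  have i1 : al 0 + al 0 * h₂ + al 0 * k₂ + al σ * s₂ + al τ * (h₂ * k₂) = 0 := by
    rw [Algebra.smul_def σ s₂, Algebra.smul_def τ (h₂ * k₂)] at hστ
    linear_combination hστ + (1 + h₂ + k₂) * alz
  obtain ⟨-, -, -, hd, he⟩ := indep _ _ _ _ _ i1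
  exact ⟨hd, he⟩

lemma range_pair : Set.range ![s₂, h₂ * k₂] = {s₂, h₂ * k₂} := by
  ext z
  simp [Fin.exists_fin_two, or_comm]

lemma fr2 : Module.finrank (ZMod 2)
    ↥(Submodule.restrictScalars (ZMod 2)
      ((Ideal.span {h₂, k₂, s₂} : Ideal R₂).annihilator)) = 2 := by
  rw [ann_eq, ← range_pair]
  have := finrank_span_eq_card (R := ZMod 2) indep_pair
  simpa using this

set_option synthInstance.maxHeartbeats 1000000 in
theorem socle_of_mod2_burnside_klein :
    IsLocalRing R₂ ∧
    (∀ (inst : IsLocalRing R₂),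
      @IsLocalRing.maximalIdeal R₂ _ inst = Ideal.span {h₂, k₂, s₂}) ∧
    Submodule.restrictScalars (ZMod 2)
        ((Ideal.span {h₂, k₂, s₂} : Ideal R₂).annihilator) =
      Submodule.span (ZMod 2) {s₂, h₂ * k₂} ∧
    Module.finrank (ZMod 2)
      ↥(Submodule.restrictScalars (ZMod 2)
        ((Ideal.span {h₂, k₂, s₂} : Ideal R₂).annihilator)) = 2 := by
  refine ⟨R2_local, fun inst => ?_, ann_eq, fr2⟩
  exact (@IsLocalRing.eq_maximalIdeal R₂ _ inst _ m_maximal).symm
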